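/- For quaternions x and y, y belongs to the 2-sphere [x] = {x₀ + i x₁ : i ∈ 𝕊} (where x = x₀ + i_x x₁ with x₀ = Re(x), x₁ = |Im(x)|) if and only if there exists a quaternion q with |q| = 1 such that y = q⁻¹ x q. -/

import Mathlib

open Quaternion

private lemma qmul_re_comm (a b : ℍ[ℝ]) : (a * b).re = (b * a).re := by
  simp [Quaternion.re_mul]; ring

private lemma norm_one_of_normSq_one {a : ℍ[ℝ]} (h : normSq a = 1) : ‖a‖ = 1 := by
  have := Quaternion.normSq_eq_norm_mul_self a
  nlinarith [norm_nonneg a]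

private lemma pure_unit_mul_self {u : ℍ[ℝ]} (hr : u.re = 0) (hn : ‖u‖ = 1) :
    u * u = -1 := by
  have hs : star u = -u := Quaternion.star_eq_neg.mpr hr
  have h1 : u * star u = ((normSq u : ℝ) : ℍ[ℝ]) := Quaternion.self_mul_star u
  have h2 : normSq u = 1 := by
    have := Quaternion.normSq_eq_norm_mul_self u
    rw [hn] at this; simpa using this
  rw [hs, h2] at h1
  simpa [mul_neg, neg_eq_iff_eq_neg] using h1

private lemma step_lemma {u m : ℍ[ℝ]} (hu : u * u = -1) (hm : m * m = -1) :
    u * (1 - u * m) = (1 - u * m) * m := by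
  rw [mul_sub, sub_mul, mul_one, one_mul, ← mul_assoc, hu, mul_assoc, hm,
    neg_one_mul, mul_neg_one, sub_neg_eq_add, sub_neg_eq_add, add_comm]

private lemma exists_middle (u v : ℍ[ℝ]) :
    ∃ m : ℍ[ℝ], m.re = 0 ∧ ‖m‖ = 1 ∧ m ≠ -u ∧ m ≠ -v := by
  set e1 : ℍ[ℝ] := ⟨0,1,0,0⟩ with he1
  set e2 : ℍ[ℝ] := ⟨0,0,1,0⟩ with he2
  set e3 : ℍ[ℝ] := ⟨0,0,0,1⟩ with he3
  have hn1 : ‖e1‖ = 1 := norm_one_of_normSq_one ((Quaternion.normSq_def' _).trans (by norm_num))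
  have hn2 : ‖e2‖ = 1 := norm_one_of_normSq_one ((Quaternion.normSq_def' _).trans (by norm_num))
  have hn3 : ‖e3‖ = 1 := norm_one_of_normSq_one ((Quaternion.normSq_def' _).trans (by norm_num))
  by_cases h1 : e1 ≠ -u ∧ e1 ≠ -v
  · exact ⟨e1, rfl, hn1, h1.1, h1.2⟩
  by_cases h2 : e2 ≠ -u ∧ e2 ≠ -v
  · exact ⟨e2, rfl, hn2, h2.1, h2.2⟩
  push_neg at h1 h2
  refine ⟨e3, rfl, hn3, ?_, ?_⟩
  · intro h3
    by_cases hu1 : e1 = -u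
    · rw [← h3] at hu1; simp [Quaternion.ext_iff, he1, he3] at hu1; exact absurd (congrArg QuaternionAlgebra.imI hu1) (by norm_num)
    · have hv1 := h1 hu1
      by_cases hu2 : e2 = -u
      · rw [← h3] at hu2; simp [Quaternion.ext_iff, he2, he3] at hu2; exact absurd (congrArg QuaternionAlgebra.imJ hu2) (by norm_num)
      · have hv2 := h2 hu2
        rw [← hv2] at hv1; simp [Quaternion.ext_iff, he1, he2] at hv1; exact absurd (congrArg QuaternionAlgebra.imI hv1) (by norm_num)
  · intro h3
    by_cases hu1 : e1 = -u
    · have : e2 = -u ∨ e2 = -v := by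
        by_cases hu2 : e2 = -u
        · exact Or.inl hu2
        · exact Or.inr (h2 hu2)
      rcases this with hu2 | hv2
      · rw [← hu2] at hu1; simp [Quaternion.ext_iff, he1, he2] at hu1; exact absurd (congrArg QuaternionAlgebra.imI hu1) (by norm_num)
      · rw [← h3] at hv2; simp [Quaternion.ext_iff, he2, he3] at hv2; exact absurd (congrArg QuaternionAlgebra.imJ hv2) (by norm_num)
    · have hv1 := h1 hu1
      rw [← h3] at hv1; simp [Quaternion.ext_iff, he1, he3] at hv1; exact absurd (congrArg QuaternionAlgebra.imI hv1) (by norm_num)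

private lemma exists_conj {u v : ℍ[ℝ]} (hur : u.re = 0) (hun : ‖u‖ = 1)
    (hvr : v.re = 0) (hvn : ‖v‖ = 1) :
    ∃ q : ℍ[ℝ], ‖q‖ = 1 ∧ q⁻¹ * u * q = v := by
  obtain ⟨m, hmr, hmn, hmu, hmv⟩ := exists_middle u v
  have hu2 := pure_unit_mul_self hur hun
  have hm2 := pure_unit_mul_self hmr hmn
  have hv2 := pure_unit_mul_self hvr hvn
  have hA : (1 : ℍ[ℝ]) - u * m ≠ 0 := by
    intro h
    have hum : u * m = 1 := by rwa [sub_eq_zero, eq_comm] at h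
    apply hmu
    have h2 : u * (u * m) = u := by rw [hum, mul_one]
    rw [← mul_assoc, hu2, neg_one_mul] at h2
    exact neg_eq_iff_eq_neg.mp h2
  have hB : (1 : ℍ[ℝ]) - m * v ≠ 0 := by
    intro h
    have hmv' : m * v = 1 := by rwa [sub_eq_zero, eq_comm] at h
    apply hmv
    have h2 : m * (m * v) = m := by rw [hmv', mul_one]
    rw [← mul_assoc, hm2, neg_one_mul] at h2
    exact h2.symm
  set q₀ : ℍ[ℝ] := (1 - u * m) * (1 - m * v) with hq₀
  have hq₀ne : q₀ ≠ 0 := mul_ne_zero hA hB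
  have hcomm : u * q₀ = q₀ * v := by
    rw [hq₀, ← mul_assoc, step_lemma hu2 hm2, mul_assoc, step_lemma hm2 hv2, ← mul_assoc]
  have hnq₀ : ‖q₀‖ ≠ 0 := norm_ne_zero_iff.mpr hq₀ne
  refine ⟨‖q₀‖⁻¹ • q₀, ?_, ?_⟩
  · rw [norm_smul, norm_inv, norm_norm, inv_mul_cancel₀ hnq₀]
  · have hinv : (‖q₀‖⁻¹ • q₀)⁻¹ = ‖q₀‖ • q₀⁻¹ :=
      inv_eq_of_mul_eq_one_right (by
        rw [smul_mul_smul_comm, inv_mul_cancel₀ hnq₀, mul_inv_cancel₀ hq₀ne, one_smul])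
    rw [hinv, smul_mul_assoc, smul_mul_assoc, mul_smul_comm, smul_smul,
      mul_inv_cancel₀ hnq₀, one_smul, mul_assoc, hcomm, ← mul_assoc,
      inv_mul_cancel₀ hq₀ne, one_mul]

/-- A quaternion `y` belongs to the 2-sphere `[x] = {x₀ + i x₁ : i ∈ 𝕊}`, where
`x₀ = Re x` and `x₁ = |Im x|`, if and only if `y = q⁻¹ * x * q` for some unit
quaternion `q`. -/
theorem mem_sphere_iff_exists_unit_conjugate (x y : ℍ[ℝ]) :
    (∃ i : ℍ[ℝ], i.re = 0 ∧ ‖i‖ = 1 ∧ y = (x.re : ℍ[ℝ]) + ‖x.im‖ • i) ↔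
      (∃ q : ℍ[ℝ], ‖q‖ = 1 ∧ y = q⁻¹ * x * q) := by
  constructor
  · rintro ⟨i, hir, hin, hy⟩
    by_cases him : x.im = 0
    · refine ⟨1, norm_one, ?_⟩
      have hx : x = (x.re : ℍ[ℝ]) := by
        conv_lhs => rw [← x.re_add_im]
        rw [him, add_zero]
      rw [hy, him, norm_zero, zero_smul, add_zero, ← hx]
      simp
    · set u : ℍ[ℝ] := ‖x.im‖⁻¹ • x.im with hu
      have hnim : ‖x.im‖ ≠ 0 := norm_ne_zero_iff.mpr him
      have hur : u.re = 0 := by simp [hu]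
      have hun : ‖u‖ = 1 := by
        rw [hu, norm_smul, norm_inv, norm_norm, inv_mul_cancel₀ hnim]
      obtain ⟨q, hq, hconj⟩ := exists_conj hur hun hir hin
      have hq0 : q ≠ 0 := by intro h; rw [h, norm_zero] at hq; exact zero_ne_one hq
      refine ⟨q, hq, ?_⟩
      have him' : ‖x.im‖ • u = x.im := by rw [hu, smul_smul, mul_inv_cancel₀ hnim, one_smul]
      calc y = (x.re : ℍ[ℝ]) + ‖x.im‖ • (q⁻¹ * u * q) := by rw [hy, hconj]
        _ = (x.re : ℍ[ℝ]) + q⁻¹ * (x.im * q) := by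
              congr 1
              rw [mul_assoc, ← mul_smul_comm, ← smul_mul_assoc, him']
        _ = q⁻¹ * (x.re : ℍ[ℝ]) * q + q⁻¹ * (x.im * q) := by
              rw [← Quaternion.coe_commutes, mul_assoc ((x.re : ℝ) : ℍ[ℝ]),
                inv_mul_cancel₀ hq0, mul_one]
        _ = q⁻¹ * x * q := by
              rw [mul_assoc q⁻¹ ((x.re : ℝ) : ℍ[ℝ]) q, ← mul_add, ← add_mul,
                x.re_add_im, ← mul_assoc]
  · rintro ⟨q, hq, hy⟩
    have hq0 : q ≠ 0 := by intro h; rw [h, norm_zero] at hq; exact zero_ne_one hq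
    set w : ℍ[ℝ] := q⁻¹ * x.im * q with hw
    have hyw : y = (x.re : ℍ[ℝ]) + w := by
      rw [hy]
      conv_lhs => rw [← x.re_add_im]
      rw [mul_add, add_mul, hw]
      congr 1
      rw [← Quaternion.coe_commutes, mul_assoc ((x.re : ℝ) : ℍ[ℝ]),
        inv_mul_cancel₀ hq0, mul_one]
    have hwr : w.re = 0 := by
      rw [hw, qmul_re_comm, ← mul_assoc, mul_inv_cancel₀ hq0, one_mul, Quaternion.re_im]
    have hwn : ‖w‖ = ‖x.im‖ := by
      rw [hw, norm_mul, norm_mul, norm_inv, hq]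
      simp
    by_cases him : x.im = 0
    · refine ⟨⟨0,1,0,0⟩, rfl, norm_one_of_normSq_one ((Quaternion.normSq_def' _).trans (by norm_num)), ?_⟩
      have : w = 0 := by
        rw [← norm_eq_zero, hwn, him, norm_zero]
      rw [hyw, this, add_zero, him, norm_zero]
      exact (add_zero _).symm.trans (congrArg _ (zero_smul ℝ _).symm)
    · have hnim : ‖x.im‖ ≠ 0 := norm_ne_zero_iff.mpr him
      refine ⟨‖x.im‖⁻¹ • w, ?_, ?_, ?_⟩
      · simp [hwr]
      · rw [norm_smul, norm_inv, norm_norm, hwn, inv_mul_cancel₀ hnim]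
      · rw [smul_smul, mul_inv_cancel₀ hnim, one_smul, hyw]
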